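/- Let A : X → Y be bounded linear, G : X → X with contractive residual of constant L < 1, and α > 0. Suppose x satisfies ‖A*(A x − y) + α G(x)‖ ≤ ε and x* satisfies A*(A x* − y) + α G(x*) = 0. Then ‖x − x*‖ ≤ ε / (α(1−L)). -/
import Mathlib

open RealInnerProductSpace

theorem stmt16 {X Y : Type*} [NormedAddCommGroup X] [InnerProductSpace ℝ X]
    [NormedAddCommGroup Y] [InnerProductSpace ℝ Y] [CompleteSpace X] [CompleteSpace Y]
    (A : X →L[ℝ] Y) (G : X → X) (L : ℝ) (hL : L < 1)
    (hres : ∀ x z : X, ‖(G x - x) - (G z - z)‖ ≤ L * ‖x - z‖)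
    (α : ℝ) (hα : 0 < α) (ε : ℝ) (hε : 0 < ε) (y : Y) (x xs : X)
    (hx : ‖(ContinuousLinearMap.adjoint A) (A x - y) + α • G x‖ ≤ ε)
    (hxs : (ContinuousLinearMap.adjoint A) (A xs - y) + α • G xs = 0) :
    ‖x - xs‖ ≤ ε / (α * (1 - L)) := by
  set d := x - xs with hd
  set r := (G x - x) - (G xs - xs) with hr
  set T := (ContinuousLinearMap.adjoint A) (A x - y) + α • G x with hT
  have hdecomp : T = (ContinuousLinearMap.adjoint A) (A d) + α • d + α • r := by
    have key : T = (ContinuousLinearMap.adjoint A) (A d) + α • d + α • r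
        + ((ContinuousLinearMap.adjoint A) (A xs - y) + α • G xs) := by
      rw [hT, hd, hr]
      simp only [map_sub]
      module
    rw [hxs, add_zero] at key
    exact key
  have hinner : ⟪T, d⟫ = ‖A d‖^2 + α * ‖d‖^2 + α * ⟪r, d⟫ := by
    rw [hdecomp]
    rw [inner_add_left, inner_add_left, real_inner_smul_left, real_inner_smul_left,
      ContinuousLinearMap.adjoint_inner_left, real_inner_self_eq_norm_sq,
      real_inner_self_eq_norm_sq]
  have hrd : -(L * ‖d‖^2) ≤ ⟪r, d⟫ := by
    have h1 : |⟪r, d⟫| ≤ ‖r‖ * ‖d‖ := abs_real_inner_le_norm r d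
    have h2 : ‖r‖ * ‖d‖ ≤ L * ‖d‖ * ‖d‖ :=
      mul_le_mul_of_nonneg_right (hres x xs) (norm_nonneg d)
    have h3 := neg_abs_le (⟪r, d⟫)
    nlinarith
  have hupper : ⟪T, d⟫ ≤ ε * ‖d‖ := by
    calc ⟪T, d⟫ ≤ ‖T‖ * ‖d‖ := real_inner_le_norm T d
    _ ≤ ε * ‖d‖ := mul_le_mul_of_nonneg_right hx (norm_nonneg d)
  have hkey : α * (1 - L) * ‖d‖^2 ≤ ε * ‖d‖ := by
    have hAd : (0:ℝ) ≤ ‖A d‖^2 := sq_nonneg _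
    nlinarith [hinner, hupper, hrd]
  have hden : 0 < α * (1 - L) := mul_pos hα (by linarith)
  rcases eq_or_lt_of_le (norm_nonneg d) with h0 | h0
  · rw [← h0]
    positivity
  · rw [le_div_iff₀ hden]
    nlinarith [hkey]
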